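/- Let (P(t), t ≥ 0) be a stochastic process with values in the natural numbers such that almost surely the map t ↦ P(t) is nondecreasing, and such that for every t > 0 the random variable P(t) has the Poisson distribution with parameter t. Then for every ε > 0, almost surely lim_{t → ∞} (P(t) − t)/t^{1/2+ε} = 0. -/

import Mathlib

open MeasureTheory ProbabilityTheory Filter Set Topology

section helpers

private lemma tsum_pow_div_factorial_eq (x : ℝ) :
    ∑' k : ℕ, x ^ k / (Nat.factorial k) = Real.exp x := by
  rw [Real.exp_eq_exp_ℝ, NormedSpace.exp_eq_tsum_div]

private lemma poisson_upper_tail {Ω : Type*} [MeasureSpace Ω] (X : Ω → ℕ) {t : ℝ} (ht : 0 ≤ t)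
    (h : ∀ k : ℕ, ℙ {ω | X ω = k} = ENNReal.ofReal (Real.exp (-t) * t ^ k / (Nat.factorial k)))
    {z : ℝ} (hz : 1 ≤ z) (m : ℕ) :
    ℙ {ω | m ≤ X ω} ≤ ENNReal.ofReal (Real.exp (t * (z - 1)) / z ^ m) := by
  have hz0 : (0:ℝ) < z := lt_of_lt_of_le one_pos hz
  have hzm : (0:ℝ) < z ^ m := pow_pos hz0 m
  set g : ℕ → ℝ := fun k => Real.exp (-t) * t ^ k / (Nat.factorial k) with hgdef
  set G : ℕ → ℝ := fun k => Real.exp (-t) * ((z * t) ^ k / (Nat.factorial k)) with hGdef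
  have hgnn : ∀ k, 0 ≤ g k := fun k => by
    have : (0:ℝ) ≤ t ^ k := pow_nonneg ht k
    positivity
  have hGnn : ∀ k, 0 ≤ G k := fun k => by
    have : (0:ℝ) ≤ (z*t) ^ k := pow_nonneg (by positivity) k
    positivity
  have hgs : Summable g := by
    simpa [hgdef, mul_div_assoc] using (Real.summable_pow_div_factorial t).mul_left (Real.exp (-t))
  have hGs : Summable G := (Real.summable_pow_div_factorial (z*t)).mul_left (Real.exp (-t))
  have hgs' : Summable fun j => g (j + m) := (summable_nat_add_iff m).2 hgs
  have hGs' : Summable fun j => G (j + m) := (summable_nat_add_iff m).2 hGs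
  have hsub : {ω | m ≤ X ω} ⊆ ⋃ j : ℕ, {ω | X ω = j + m} := by
    intro ω hω
    simp only [Set.mem_setOf_eq] at hω
    exact mem_iUnion.2 ⟨X ω - m, by simp only [Set.mem_setOf_eq]; omega⟩
  have key : ∑' j, g (j + m) ≤ Real.exp (t * (z - 1)) / z ^ m := by
    have h1 : ∀ j : ℕ, g (j + m) ≤ G (j + m) / z ^ m := by
      intro j
      have hGe : G (j + m) / z ^ m = z ^ j * g (j + m) := by
        simp only [hGdef, hgdef, mul_pow, pow_add]
        field_simp
      rw [hGe]
      exact le_mul_of_one_le_left (hgnn _) (one_le_pow₀ hz)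
    have h2 : ∑' j, G (j + m) ≤ ∑' k, G k := by
      have h3 := Summable.sum_add_tsum_nat_add m hGs
      have h4 : (0:ℝ) ≤ ∑ i ∈ Finset.range m, G i := Finset.sum_nonneg fun i _ => hGnn i
      linarith
    have h5 : ∑' k, G k = Real.exp (t * (z - 1)) := by
      rw [hGdef, tsum_mul_left, tsum_pow_div_factorial_eq, ← Real.exp_add]
      ring_nf
    calc ∑' j, g (j + m) ≤ ∑' j, G (j + m) / z ^ m := Summable.tsum_le_tsum h1 hgs' (hGs'.div_const _)
      _ = (∑' j, G (j + m)) / z ^ m := by rw [tsum_div_const]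
      _ ≤ (∑' k, G k) / z ^ m := by gcongr
      _ = Real.exp (t * (z - 1)) / z ^ m := by rw [h5]
  calc ℙ {ω | m ≤ X ω} ≤ ∑' j : ℕ, ℙ {ω | X ω = j + m} :=
        (measure_mono hsub).trans (measure_iUnion_le _)
    _ = ∑' j : ℕ, ENNReal.ofReal (g (j + m)) := by simp_rw [h]; rfl
    _ = ENNReal.ofReal (∑' j, g (j + m)) :=
        (ENNReal.ofReal_tsum_of_nonneg (fun j => hgnn _) hgs').symm
    _ ≤ _ := ENNReal.ofReal_le_ofReal key

private lemma poisson_lower_tail {Ω : Type*} [MeasureSpace Ω] (X : Ω → ℕ) {t : ℝ} (ht : 0 ≤ t)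
    (h : ∀ k : ℕ, ℙ {ω | X ω = k} = ENNReal.ofReal (Real.exp (-t) * t ^ k / (Nat.factorial k)))
    {z : ℝ} (hz0 : 0 < z) (hz : z ≤ 1) (m : ℕ) :
    ℙ {ω | X ω < m} ≤ ENNReal.ofReal (Real.exp (t * (z - 1)) / z ^ m) := by
  have hzm : (0:ℝ) < z ^ m := pow_pos hz0 m
  set g : ℕ → ℝ := fun k => Real.exp (-t) * t ^ k / (Nat.factorial k) with hgdef
  set G : ℕ → ℝ := fun k => Real.exp (-t) * ((z * t) ^ k / (Nat.factorial k)) with hGdef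
  have hgnn : ∀ k, 0 ≤ g k := fun k => by
    have : (0:ℝ) ≤ t ^ k := pow_nonneg ht k
    positivity
  have hsub : {ω | X ω < m} ⊆ ⋃ j ∈ Finset.range m, {ω | X ω = j} := by
    intro ω hω
    simp only [Set.mem_setOf_eq] at hω
    simp only [Set.mem_iUnion, Finset.mem_range, Set.mem_setOf_eq]
    exact ⟨X ω, hω, rfl⟩
  have key : ∑ j ∈ Finset.range m, g j ≤ Real.exp (t * (z - 1)) / z ^ m := by
    have h1 : ∀ j ∈ Finset.range m, g j ≤ G j / z ^ m := by
      intro j hj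
      have hjm : j ≤ m := le_of_lt (Finset.mem_range.1 hj)
      have hGe : G j / z ^ m = (z ^ j / z ^ m) * g j := by
        simp only [hGdef, hgdef, mul_pow]
        field_simp
      rw [hGe]
      refine le_mul_of_one_le_left (hgnn _) ?_
      rw [le_div_iff₀ hzm]
      simpa using pow_le_pow_of_le_one (le_of_lt hz0) hz hjm
    have h2 : ∑ j ∈ Finset.range m, G j ≤ Real.exp (-t) * Real.exp (z * t) := by
      rw [hGdef, ← Finset.mul_sum]
      exact mul_le_mul_of_nonneg_left
        (Real.sum_le_exp_of_nonneg (by positivity) m) (Real.exp_pos _).le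
    calc ∑ j ∈ Finset.range m, g j ≤ ∑ j ∈ Finset.range m, G j / z ^ m :=
          Finset.sum_le_sum h1
      _ = (∑ j ∈ Finset.range m, G j) / z ^ m := by rw [Finset.sum_div]
      _ ≤ (Real.exp (-t) * Real.exp (z * t)) / z ^ m := by gcongr
      _ = Real.exp (t * (z - 1)) / z ^ m := by rw [← Real.exp_add]; ring_nf
  calc ℙ {ω | X ω < m} ≤ ∑ j ∈ Finset.range m, ℙ {ω | X ω = j} :=
        (measure_mono hsub).trans (measure_biUnion_finset_le _ _)
    _ = ∑ j ∈ Finset.range m, ENNReal.ofReal (g j) := by simp_rw [h]; rfl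
    _ = ENNReal.ofReal (∑ j ∈ Finset.range m, g j) :=
        (ENNReal.ofReal_sum_of_nonneg (fun j _ => hgnn _)).symm
    _ ≤ _ := ENNReal.ofReal_le_ofReal key

private lemma tsum_ne_top_helper {f : ℕ → ENNReal} (hf : ∀ n, f n ≤ 1) {g : ℕ → ℝ}
    (hgnn : ∀ n, 0 ≤ g n) (hgs : Summable g)
    (h : ∀ᶠ n in atTop, f n ≤ ENNReal.ofReal (g n)) :
    ∑' n, f n ≠ ⊤ := by
  obtain ⟨N, hN⟩ := eventually_atTop.mp h
  set ind : ℕ → ENNReal := Set.indicator ↑(Finset.range N) (fun _ => (1:ENNReal)) with hind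
  have hle : ∀ n, f n ≤ ENNReal.ofReal (g n) + ind n := by
    intro n
    by_cases hn : n < N
    · have : ind n = 1 := Set.indicator_of_mem (by simpa using hn) _
      rw [this]
      exact le_add_left (hf n)
    · exact le_add_right (hN n (le_of_not_gt hn))
  have h2 : ∑' n, f n ≤ (∑' n, ENNReal.ofReal (g n)) + ∑' n, ind n := by
    rw [← ENNReal.tsum_add]
    exact Summable.tsum_le_tsum hle ENNReal.summable ENNReal.summable
  have h3 : ∑' n, ENNReal.ofReal (g n) ≠ ⊤ := by
    rw [← ENNReal.ofReal_tsum_of_nonneg hgnn hgs]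
    exact ENNReal.ofReal_ne_top
  have h4 : ∑' n, ind n ≠ ⊤ := by
    have : ∑' n, ind n = ∑ n ∈ Finset.range N, ind n :=
      tsum_eq_sum (fun b hb => Set.indicator_of_notMem (by simpa using hb) _)
    rw [this]
    refine (ENNReal.sum_lt_top.2 fun i _ => ?_).ne
    simp only [hind, Set.indicator]
    split <;> simp
  exact ne_top_of_le_ne_top (ENNReal.add_ne_top.2 ⟨h3, h4⟩) h2

private lemma log_one_add_ge {δ : ℝ} (hδ : 0 ≤ δ) : δ - δ ^ 2 ≤ Real.log (1 + δ) := by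
  have h1 : (0:ℝ) < 1 + δ := by linarith
  have h2 := Real.one_sub_inv_le_log_of_pos h1
  have h3 : (1 : ℝ) - (1 + δ)⁻¹ = δ / (1 + δ) := by field_simp; ring
  have h4 : δ - δ ^ 2 ≤ δ / (1 + δ) := by
    rw [le_div_iff₀ h1]; nlinarith
  linarith [h3 ▸ h2]

private lemma neg_log_one_sub_le {δ : ℝ} (hδ : 0 ≤ δ) (hδ2 : δ ≤ 1/2) :
    -Real.log (1 - δ) ≤ δ + 2 * δ ^ 2 := by
  have h1 : (0:ℝ) < 1 - δ := by linarith
  have h2 := Real.one_sub_inv_le_log_of_pos h1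
  have h3 : (1 : ℝ) - (1 - δ)⁻¹ = -(δ / (1 - δ)) := by field_simp; ring
  have h4 : δ / (1 - δ) ≤ δ + 2 * δ ^ 2 := by
    rw [div_le_iff₀ h1]; nlinarith
  have h5 : -(δ + 2 * δ ^ 2) ≤ Real.log (1 - δ) := by
    refine le_trans ?_ h2
    rw [h3]
    exact neg_le_neg h4
  linarith

end helpers

set_option maxHeartbeats 2000000 in
theorem poisson_process_clt_vanishing
    {Ω : Type*} [MeasureSpace Ω] [IsProbabilityMeasure (ℙ : Measure Ω)]
    (P : ℝ → Ω → ℕ)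
    (hmono : ∀ᵐ ω ∂ℙ, ∀ s t : ℝ, 0 ≤ s → s ≤ t → P s ω ≤ P t ω)
    (hpois : ∀ t : ℝ, 0 < t → ∀ k : ℕ,
      ℙ {ω | P t ω = k} =
        ENNReal.ofReal (Real.exp (-t) * t ^ k / (Nat.factorial k)))
    (ε : ℝ) (hε : 0 < ε) :
    ∀ᵐ ω ∂ℙ, Tendsto (fun t : ℝ => ((P t ω : ℝ) - t) / t ^ ((1:ℝ)/2 + ε))
      atTop (𝓝 0) := by
  classical
  set c : ℝ := min ε (1/2) / 2 with hcdef
  have hc0 : 0 < c := by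
    have := lt_min hε (by norm_num : (0:ℝ) < 1/2)
    positivity
  have hc4 : c ≤ 1/4 := by
    have := min_le_right ε (1/2)
    rw [hcdef]; linarith
  have hcε : c < ε := by
    have h1 := min_le_left ε (1/2)
    rw [hcdef]; linarith
  -- the bad events
  set aa : ℕ → ℝ := fun n => (n:ℝ) ^ ((1:ℝ)/2 + c) with haa
  set B : ℕ → Set Ω := fun n =>
    {ω | (n:ℝ) + aa n < (P (n:ℝ) ω : ℝ)} ∪ {ω | ((P (n:ℝ) ω : ℝ)) < (n:ℝ) - aa n} with hB
  -- the key tail estimate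
  have key : ∀ᶠ n : ℕ in atTop,
      ℙ (B n) ≤ ENNReal.ofReal (2 * Real.exp (-(n:ℝ) ^ (2*c) / 16)) := by
    have hev1 : ∀ᶠ n : ℕ in atTop, 1 ≤ n := eventually_ge_atTop 1
    have hev2 : ∀ᶠ n : ℕ in atTop, 64 ≤ ((n:ℝ)) ^ (2*c) := by
      have h2c : (0:ℝ) < 2*c := by linarith
      exact ((tendsto_rpow_atTop h2c).comp
        tendsto_natCast_atTop_atTop).eventually_ge_atTop 64
    filter_upwards [hev1, hev2] with n hn1 hq
    have ht1 : (1:ℝ) ≤ (n:ℝ) := by exact_mod_cast hn1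
    have ht0 : (0:ℝ) < (n:ℝ) := by linarith
    set t : ℝ := (n:ℝ) with htdef
    set q : ℝ := t ^ (2*c) with hqdef
    set d : ℝ := t ^ (c - 1/2) with hddef
    set a : ℝ := t ^ ((1:ℝ)/2 + c) with hadef
    have hd0 : 0 < d := Real.rpow_pos_of_pos ht0 _
    have hd1 : d ≤ 1 := Real.rpow_le_one_of_one_le_of_nonpos ht1 (by linarith)
    have ha0 : 0 ≤ a := (Real.rpow_pos_of_pos ht0 _).le
    have hq0 : (0:ℝ) < q := Real.rpow_pos_of_pos ht0 _
    have hat : a ≤ t := by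
      calc a ≤ t ^ (1:ℝ) := Real.rpow_le_rpow_of_exponent_le ht1 (by linarith)
        _ = t := Real.rpow_one t
    have htd2 : t * (d * d) = q := by
      rw [hddef, hqdef, ← Real.rpow_add ht0]
      nth_rewrite 1 [← Real.rpow_one t]
      rw [← Real.rpow_add ht0]
      norm_num
      ring_nf
    have had : a * d = q := by
      rw [hadef, hddef, hqdef, ← Real.rpow_add ht0]
      ring_nf
    set δ : ℝ := d / 8 with hδdef
    have hδ0 : 0 ≤ δ := by positivity
    have hδ8 : δ ≤ 1/8 := by rw [hδdef]; linarith
    have hpn : ∀ k : ℕ, ℙ {ω | P t ω = k} =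
        ENNReal.ofReal (Real.exp (-t) * t ^ k / (Nat.factorial k)) := hpois t ht0
    have haan : aa n = a := rfl
    -- upper tail
    have hU : ℙ {ω | t + aa n < (P t ω : ℝ)} ≤ ENNReal.ofReal (Real.exp (-q/16)) := by
      set mu : ℕ := ⌊t + a⌋₊ + 1 with hmudef
      have hsubU : {ω | t + aa n < (P t ω : ℝ)} ⊆ {ω | mu ≤ P t ω} := by
        intro ω hω
        simp only [Set.mem_setOf_eq, haan] at hω ⊢
        have := (Nat.floor_lt (by positivity : (0:ℝ) ≤ t + a)).2 hω
        omega
      have hmu : t + a ≤ (mu : ℝ) := by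
        rw [hmudef]
        push_cast
        exact (Nat.lt_floor_add_one (t + a)).le
      have hzu : (1:ℝ) ≤ 1 + δ := by linarith
      refine le_trans ((measure_mono hsubU).trans
        (poisson_upper_tail (P t) ht0.le hpn hzu mu)) (ENNReal.ofReal_le_ofReal ?_)
      have hpow : ((1:ℝ) + δ) ^ mu = Real.exp ((mu : ℝ) * Real.log (1 + δ)) := by
        rw [← Real.log_pow, Real.exp_log (pow_pos (by linarith) _)]
      rw [hpow, ← Real.exp_sub]
      apply Real.exp_le_exp.2
      have hlog := log_one_add_ge hδ0
      have hlognn : 0 ≤ δ - δ ^ 2 := by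
        have : δ * δ ≤ δ * 1 := mul_le_mul_of_nonneg_left (by linarith) hδ0
        have hsq : δ ^ 2 = δ * δ := sq δ
        linarith
      have h5 : (t + a) * (δ - δ ^ 2) ≤ (mu : ℝ) * Real.log (1 + δ) :=
        mul_le_mul hmu hlog hlognn (Nat.cast_nonneg mu)
      have h6 : t * ((1 + δ) - 1) - (t + a) * (δ - δ ^ 2) ≤ -q/16 := by
        have e1 : t * δ * δ = q / 64 := by
          rw [hδdef]; linear_combination htd2 / 64
        have e2 : a * δ = q / 8 := by
          rw [hδdef]; linear_combination had / 8
        have e3 : a * δ * δ ≤ q / 64 := by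
          have he : a * δ * δ = (a * d) * d / 64 := by rw [hδdef]; ring
          rw [he, had]
          have : q * d ≤ q * 1 := mul_le_mul_of_nonneg_left hd1 hq0.le
          linarith
        have expand : t * ((1 + δ) - 1) - (t + a) * (δ - δ ^ 2)
            = t * δ * δ - a * δ + a * δ * δ := by ring
        rw [expand, e1, e2]
        have h7 : q / 8 * δ ≤ q / 64 := by
          have := mul_le_mul_of_nonneg_left hδ8 (by positivity : (0:ℝ) ≤ q/8)
          linarith
        linarith
      linarith
    -- lower tail
    have hL : ℙ {ω | ((P t ω : ℝ)) < t - aa n} ≤ ENNReal.ofReal (Real.exp (-q/16)) := by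
      set ml : ℕ := ⌈t - a⌉₊ with hmldef
      have hta : (0:ℝ) ≤ t - a := by linarith
      have hsubL : {ω | ((P t ω : ℝ)) < t - aa n} ⊆ {ω | P t ω < ml} := by
        intro ω hω
        simp only [Set.mem_setOf_eq, haan] at hω ⊢
        have h1 : ((P t ω : ℝ)) < (ml : ℝ) := lt_of_lt_of_le hω (Nat.le_ceil _)
        exact_mod_cast h1
      have hml : (ml : ℝ) ≤ t - a + 1 := (Nat.ceil_lt_add_one hta).le
      have hz0 : (0:ℝ) < 1 - δ := by linarith
      have hz1 : (1:ℝ) - δ ≤ 1 := by linarith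
      refine le_trans ((measure_mono hsubL).trans
        (poisson_lower_tail (P t) ht0.le hpn hz0 hz1 ml)) (ENNReal.ofReal_le_ofReal ?_)
      have hpow : ((1:ℝ) - δ) ^ ml = Real.exp ((ml : ℝ) * Real.log (1 - δ)) := by
        rw [← Real.log_pow, Real.exp_log (pow_pos hz0 _)]
      rw [hpow, ← Real.exp_sub]
      apply Real.exp_le_exp.2
      have hlog := neg_log_one_sub_le hδ0 (by linarith)
      have hlognn : 0 ≤ -Real.log (1 - δ) := by
        simpa using Real.log_nonpos (by linarith) (by linarith)
      have h5 : (ml : ℝ) * (-Real.log (1 - δ)) ≤ (t - a + 1) * (δ + 2 * δ ^ 2) :=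
        mul_le_mul hml hlog hlognn (by linarith)
      have h6 : t * ((1 - δ) - 1) + (t - a + 1) * (δ + 2 * δ ^ 2) ≤ -q/16 := by
        have e1 : t * δ * δ = q / 64 := by
          rw [hδdef]; linear_combination htd2 / 64
        have e2 : a * δ = q / 8 := by
          rw [hδdef]; linear_combination had / 8
        have e7 : 0 ≤ a * (δ * δ) := by positivity
        have hδδ : δ * δ ≤ 1/64 := by
          calc δ * δ ≤ (1/8 : ℝ) * (1/8) := by
                exact mul_le_mul hδ8 hδ8 hδ0 (by norm_num)
            _ = 1/64 := by norm_num
        have expand : t * ((1 - δ) - 1) + (t - a + 1) * (δ + 2 * δ ^ 2)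
            = 2 * (t * δ * δ) - a * δ - 2 * (a * (δ * δ)) + δ + 2 * (δ * δ) := by ring
        rw [expand, e1, e2]
        linarith
      linarith
    calc ℙ (B n) ≤ ℙ {ω | t + aa n < (P t ω : ℝ)} + ℙ {ω | ((P t ω : ℝ)) < t - aa n} :=
          measure_union_le _ _
      _ ≤ ENNReal.ofReal (Real.exp (-q/16)) + ENNReal.ofReal (Real.exp (-q/16)) :=
          add_le_add hU hL
      _ = ENNReal.ofReal (2 * Real.exp (-q/16)) := by
          rw [← ENNReal.ofReal_add (Real.exp_pos _).le (Real.exp_pos _).le]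
          ring_nf
      _ = ENNReal.ofReal (2 * Real.exp (-(n:ℝ) ^ (2*c) / 16)) := by rw [hqdef]
  -- comparison with a summable series
  have comp : ∀ᶠ n : ℕ in atTop,
      (2:ℝ) * Real.exp (-(n:ℝ) ^ (2*c) / 16) ≤ (n:ℝ) ^ (-2 : ℝ) := by
    have h2c : (0:ℝ) < 2*c := by linarith
    have hlo := (isLittleO_log_rpow_atTop h2c).bound (by norm_num : (0:ℝ) < 1/96)
    have hev : ∀ᶠ x : ℝ in atTop,
        (2:ℝ) * Real.exp (-x ^ (2*c) / 16) ≤ x ^ (-2 : ℝ) := by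
      filter_upwards [hlo, eventually_ge_atTop (2:ℝ)] with x hx hx2
      have hx0 : (0:ℝ) < x := by linarith
      have hx1 : (1:ℝ) ≤ x := by linarith
      have hlogx : 0 ≤ Real.log x := Real.log_nonneg hx1
      have hrpow : (0:ℝ) ≤ x ^ (2*c) := (Real.rpow_pos_of_pos hx0 _).le
      rw [Real.norm_eq_abs, Real.norm_eq_abs, abs_of_nonneg hlogx, abs_of_nonneg hrpow] at hx
      have hlog2 : Real.log 2 ≤ Real.log x := Real.log_le_log (by norm_num) hx2
      have h1 : Real.log 2 + 2 * Real.log x ≤ x ^ (2*c) / 16 := by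
        have : 3 * Real.log x ≤ 3 * (1/96 * x ^ (2*c)) := by linarith
        linarith
      have h2 : x ^ (-2 : ℝ) = Real.exp ((-2) * Real.log x) := by
        rw [Real.rpow_def_of_pos hx0, mul_comm]
      have h3 : (2:ℝ) = Real.exp (Real.log 2) := (Real.exp_log (by norm_num)).symm
      rw [h2]
      nth_rewrite 1 [h3]
      rw [← Real.exp_add]
      apply Real.exp_le_exp.2
      linarith
    exact tendsto_natCast_atTop_atTop.eventually hev
  -- Borel–Cantelli
  have hsum : ∑' n, ℙ (B n) ≠ ⊤ := by
    refine tsum_ne_top_helper (g := fun n : ℕ => (n:ℝ) ^ (-2 : ℝ)) (fun n => prob_le_one)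
      (fun n => Real.rpow_nonneg (Nat.cast_nonneg n) _)
      (Real.summable_nat_rpow.2 (by norm_num : (-2:ℝ) < -1)) ?_
    filter_upwards [key, comp] with n h1 h2
    exact h1.trans (ENNReal.ofReal_le_ofReal h2)
  have hBC := MeasureTheory.ae_eventually_notMem hsum
  -- endgame
  filter_upwards [hmono, hBC] with ω hω hbc
  obtain ⟨N, hN⟩ := eventually_atTop.mp hbc
  rw [show (0:ℝ) = 0 from rfl, tendsto_zero_iff_abs_tendsto_zero]
  have hlim : Tendsto (fun t : ℝ =>
      t ^ (-(1/2 + ε)) + 2 ^ ((1:ℝ)/2 + c) * t ^ (-(ε - c))) atTop (𝓝 0) := by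
    have T1 : Tendsto (fun t : ℝ => t ^ (-(1/2 + ε))) atTop (𝓝 0) :=
      tendsto_rpow_neg_atTop (by linarith)
    have T2 : Tendsto (fun t : ℝ => 2 ^ ((1:ℝ)/2 + c) * t ^ (-(ε - c))) atTop (𝓝 0) := by
      have := (tendsto_rpow_neg_atTop (by linarith : (0:ℝ) < ε - c)).const_mul
        ((2:ℝ) ^ ((1:ℝ)/2 + c))
      simpa using this
    simpa using T1.add T2
  refine squeeze_zero' (Eventually.of_forall fun t => abs_nonneg _) ?_ hlim
  filter_upwards [eventually_ge_atTop (max ((N:ℝ) + 1) 1)] with t ht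
  have ht1 : (1:ℝ) ≤ t := le_trans (le_max_right _ _) ht
  have htN : (N:ℝ) + 1 ≤ t := le_trans (le_max_left _ _) ht
  have ht0 : (0:ℝ) < t := by linarith
  set n : ℕ := ⌊t⌋₊ with hndef
  have hnt : (n:ℝ) ≤ t := Nat.floor_le ht0.le
  have htn1 : t < (n:ℝ) + 1 := Nat.lt_floor_add_one t
  have hnN : N ≤ n := by
    have : (N:ℕ) + 1 ≤ n := Nat.le_floor (by push_cast; linarith)
    omega
  have hn1N : N ≤ n + 1 := by omega
  -- bounds from Borel–Cantelli at n and n+1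
  have hs1 := hN n hnN
  have hs2 := hN (n+1) hn1N
  simp only [hB, Set.mem_union, Set.mem_setOf_eq, not_or, not_lt] at hs1 hs2
  have hmono1 : P (n:ℝ) ω ≤ P t ω := hω (n:ℝ) t (Nat.cast_nonneg n) hnt
  have hmono2 : P t ω ≤ P ((n:ℝ)+1) ω := hω t ((n:ℝ)+1) ht0.le htn1.le
  have hcast : ((n+1:ℕ):ℝ) = (n:ℝ) + 1 := by push_cast; ring
  -- the key numeric bound
  have haan1E : aa (n+1) ≤ (t+1) ^ ((1:ℝ)/2 + c) := by
    simp only [haa]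
    refine Real.rpow_le_rpow (Nat.cast_nonneg _) ?_ (by linarith)
    push_cast; linarith
  have haanE : aa n ≤ (t+1) ^ ((1:ℝ)/2 + c) := by
    simp only [haa]
    refine Real.rpow_le_rpow (Nat.cast_nonneg _) ?_ (by linarith)
    linarith
  have hup : (P t ω : ℝ) - t ≤ 1 + (t+1) ^ ((1:ℝ)/2 + c) := by
    have h1 : (P t ω : ℝ) ≤ (P ((n:ℝ)+1) ω : ℝ) := Nat.cast_le.2 hmono2
    have h2 := hs2.1
    rw [hcast] at h2
    linarith [haan1E]
  have hlo : t - (P t ω : ℝ) ≤ 1 + (t+1) ^ ((1:ℝ)/2 + c) := by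
    have h1 : (P (n:ℝ) ω : ℝ) ≤ (P t ω : ℝ) := Nat.cast_le.2 hmono1
    have h2 : (n:ℝ) - aa n ≤ (P (n:ℝ) ω : ℝ) := hs1.2
    linarith [haanE, htn1]
  have habs : |(P t ω : ℝ) - t| ≤ 1 + (t+1) ^ ((1:ℝ)/2 + c) :=
    abs_le.2 ⟨by linarith, by linarith⟩
  have hden : (0:ℝ) < t ^ ((1:ℝ)/2 + ε) := Real.rpow_pos_of_pos ht0 _
  rw [Function.comp_apply, abs_div, abs_of_pos hden]
  have hfrac : |(P t ω : ℝ) - t| / t ^ ((1:ℝ)/2 + ε) ≤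
      (1 + (t+1) ^ ((1:ℝ)/2 + c)) / t ^ ((1:ℝ)/2 + ε) := by
    gcongr
  refine hfrac.trans ?_
  rw [add_div]
  have hp1 : (1:ℝ) / t ^ ((1:ℝ)/2 + ε) = t ^ (-(1/2 + ε)) := by
    rw [Real.rpow_neg ht0.le, one_div]
  have hp2 : (t+1) ^ ((1:ℝ)/2 + c) / t ^ ((1:ℝ)/2 + ε) ≤
      2 ^ ((1:ℝ)/2 + c) * t ^ (-(ε - c)) := by
    have h1 : (t+1) ^ ((1:ℝ)/2 + c) ≤ (2*t) ^ ((1:ℝ)/2 + c) :=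
      Real.rpow_le_rpow (by linarith) (by linarith) (by linarith)
    have h2 : ((2:ℝ)*t) ^ ((1:ℝ)/2 + c) = 2 ^ ((1:ℝ)/2 + c) * t ^ ((1:ℝ)/2 + c) :=
      Real.mul_rpow (by norm_num) ht0.le
    have h3 : t ^ ((1:ℝ)/2 + c) / t ^ ((1:ℝ)/2 + ε) = t ^ (-(ε - c)) := by
      rw [← Real.rpow_sub ht0]
      ring_nf
    calc (t+1) ^ ((1:ℝ)/2 + c) / t ^ ((1:ℝ)/2 + ε)
        ≤ (2 ^ ((1:ℝ)/2 + c) * t ^ ((1:ℝ)/2 + c)) / t ^ ((1:ℝ)/2 + ε) := by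
          rw [← h2]; gcongr
      _ = 2 ^ ((1:ℝ)/2 + c) * (t ^ ((1:ℝ)/2 + c) / t ^ ((1:ℝ)/2 + ε)) := by ring
      _ = 2 ^ ((1:ℝ)/2 + c) * t ^ (-(ε - c)) := by rw [h3]
  rw [hp1] at *
  linarith [hp2]
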